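/- Canonical forms are unique up to equivalence: if G = H and both G and H have no dominated and no reversible options (are in canonical form), then G ≡ H (identical underlying game trees with the same scores on all termination vertices). -/

import Mathlib

inductive SGame : Type where
  | mk (left right : List SGame) (score : ℝ)

namespace SGame

def leftOpts : SGame → List SGame | mk L _ _ => L
def rightOpts : SGame → List SGame | mk _ R _ => R
def score : SGame → ℝ | mk _ _ s => s

mutual
  /-- Optimal final score when Left moves first. -/
  def leftScore : SGame → ℝ
    | mk [] _ s => s
    | mk (g :: L) _ _ => maxRight g L
  termination_by G => sizeOf G
  decreasing_by all_goals (simp; try omega)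
  def maxRight : SGame → List SGame → ℝ
    | g, [] => rightScore g
    | g, h :: t => max (rightScore g) (maxRight h t)
  termination_by g l => 1 + sizeOf g + sizeOf l
  decreasing_by all_goals (simp; try omega)
  /-- Optimal final score when Right moves first. -/
  def rightScore : SGame → ℝ
    | mk _ [] s => s
    | mk _ (g :: R) _ => minLeft g R
  termination_by G => sizeOf G
  decreasing_by all_goals (simp; try omega)
  def minLeft : SGame → List SGame → ℝ
    | g, [] => leftScore g
    | g, h :: t => min (leftScore g) (minLeft h t)
  termination_by g l => 1 + sizeOf g + sizeOf l
  decreasing_by all_goals (simp; try omega)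
end

/-- Long-rule disjunctive sum. -/
def sum : SGame → SGame → SGame
  | mk L1 R1 s1, mk L2 R2 s2 =>
    mk ((L1.attach.map fun g => sum g.1 (mk L2 R2 s2)) ++
        (L2.attach.map fun h => sum (mk L1 R1 s1) h.1))
       ((R1.attach.map fun g => sum g.1 (mk L2 R2 s2)) ++
        (R2.attach.map fun h => sum (mk L1 R1 s1) h.1))
       (s1 + s2)
termination_by G H => sizeOf G + sizeOf H
decreasing_by
  all_goals simp
  · have := List.sizeOf_lt_of_mem g.2; omega
  · have := List.sizeOf_lt_of_mem h.2; omega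
  · have := List.sizeOf_lt_of_mem g.2; omega
  · have := List.sizeOf_lt_of_mem h.2; omega

end SGame

namespace SGame

/-- The game `{.|0|.}`. -/
def zero : SGame := mk [] [] 0

/-- Negation: `-G = {-G^R | -G^S | -G^L}`. -/
def neg : SGame → SGame
  | mk L R s =>
    mk (R.attach.map fun g => neg g.1) (L.attach.map fun g => neg g.1) (-s)
termination_by G => sizeOf G
decreasing_by
  all_goals (have := List.sizeOf_lt_of_mem g.2; simp; omega)

/-- Identity of game trees (options regarded as sets). -/
def Ident : SGame → SGame → Prop
  | mk L1 R1 s1, mk L2 R2 s2 =>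
    s1 = s2 ∧
    (∀ g ∈ L1.attach, ∃ h ∈ L2.attach, Ident g.1 h.1) ∧
    (∀ h ∈ L2.attach, ∃ g ∈ L1.attach, Ident g.1 h.1) ∧
    (∀ g ∈ R1.attach, ∃ h ∈ R2.attach, Ident g.1 h.1) ∧
    (∀ h ∈ R2.attach, ∃ g ∈ R1.attach, Ident g.1 h.1)
termination_by G H => sizeOf G + sizeOf H
decreasing_by
  all_goals
    (have := List.sizeOf_lt_of_mem g.2; have := List.sizeOf_lt_of_mem h.2
     simp; omega)

inductive Outcome : Type where
  | L | R | N | P | T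
deriving DecidableEq

/-- The outcome class of a game, determined by the signs of its final scores. -/
noncomputable def outcome (G : SGame) : Outcome :=
  if 0 < G.leftScore then
    (if 0 < G.rightScore then .L else if G.rightScore = 0 then .L else .N)
  else if G.leftScore = 0 then
    (if 0 < G.rightScore then .L else if G.rightScore = 0 then .T else .R)
  else
    (if 0 < G.rightScore then .P else .R)

/-- `G ≥ H`. -/
def Ge (G H : SGame) : Prop :=
  ∀ X : SGame,
    (0 ≤ (H.sum X).leftScore → 0 ≤ (G.sum X).leftScore) ∧
    (0 ≤ (H.sum X).rightScore → 0 ≤ (G.sum X).rightScore) ∧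
    (0 < (H.sum X).leftScore → 0 < (G.sum X).leftScore) ∧
    (0 < (H.sum X).rightScore → 0 < (G.sum X).rightScore)

/-- `G ≤ H`. -/
def Le (G H : SGame) : Prop :=
  ∀ X : SGame,
    ((H.sum X).leftScore ≤ 0 → (G.sum X).leftScore ≤ 0) ∧
    ((H.sum X).rightScore ≤ 0 → (G.sum X).rightScore ≤ 0) ∧
    ((H.sum X).leftScore < 0 → (G.sum X).leftScore < 0) ∧
    ((H.sum X).rightScore < 0 → (G.sum X).rightScore < 0)

/-- Game equality: same outcome in every disjunctive-sum context. -/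
def gameEq (G H : SGame) : Prop :=
  ∀ X : SGame, (G.sum X).outcome = (H.sum X).outcome

end SGame

namespace SGame

/-- Every score in the game tree of `G` satisfies `p`. -/
def AllScores (p : ℝ → Prop) : SGame → Prop
  | mk L R s =>
    p s ∧ (∀ g ∈ L.attach, AllScores p g.1) ∧ (∀ g ∈ R.attach, AllScores p g.1)
termination_by G => sizeOf G
decreasing_by all_goals (have := List.sizeOf_lt_of_mem g.2; simp; omega)

/-- `G ≡ H`: identical underlying game trees, with equal scores at all
termination vertices (vertices at which at least one player has no option,
i.e. where the play of some disjunctive sum can end). -/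
def Equiv : SGame → SGame → Prop
  | mk L1 R1 s1, mk L2 R2 s2 =>
    ((L1 = [] ∨ R1 = []) → s1 = s2) ∧
    (∀ g ∈ L1.attach, ∃ h ∈ L2.attach, Equiv g.1 h.1) ∧
    (∀ h ∈ L2.attach, ∃ g ∈ L1.attach, Equiv g.1 h.1) ∧
    (∀ g ∈ R1.attach, ∃ h ∈ R2.attach, Equiv g.1 h.1) ∧
    (∀ h ∈ R2.attach, ∃ g ∈ R1.attach, Equiv g.1 h.1)
termination_by G H => sizeOf G + sizeOf H
decreasing_by
  all_goals
    (have := List.sizeOf_lt_of_mem g.2; have := List.sizeOf_lt_of_mem h.2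
     simp; omega)

/-- `G` is in canonical form: hereditarily, no dominated and no reversible options. -/
def Canonical : SGame → Prop
  | mk L R s =>
    (∀ A ∈ L, ∀ B ∈ L, A ≠ B → ¬ Ge A B) ∧
    (∀ D ∈ R, ∀ E ∈ R, D ≠ E → ¬ Le D E) ∧
    (∀ A ∈ L, ∀ Ar ∈ A.rightOpts, ¬ Le Ar (mk L R s)) ∧
    (∀ D ∈ R, ∀ Dl ∈ D.leftOpts, ¬ Ge Dl (mk L R s)) ∧
    (∀ g ∈ L.attach, Canonical g.1) ∧ (∀ g ∈ R.attach, Canonical g.1)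
termination_by G => sizeOf G
decreasing_by all_goals (have := List.sizeOf_lt_of_mem g.2; simp; omega)

/-- One reduction step: removing a dominated option or bypassing a reversible
option, at the root or in some subposition. -/
inductive Step : SGame → SGame → Prop where
  | domL {L1 L2 : List SGame} {R : List SGame} {s : ℝ} {B : SGame} (A : SGame)
      (hA : A ∈ L1 ++ L2) (h : Ge A B) :
      Step (mk (L1 ++ B :: L2) R s) (mk (L1 ++ L2) R s)
  | domR {R1 R2 : List SGame} {L : List SGame} {s : ℝ} {E : SGame} (D : SGame)
      (hD : D ∈ R1 ++ R2) (h : Le D E) :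
      Step (mk L (R1 ++ E :: R2) s) (mk L (R1 ++ R2) s)
  | revL {L1 L2 : List SGame} {R : List SGame} {s : ℝ} {A Ar : SGame}
      (hAr : Ar ∈ A.rightOpts) (h : Le Ar (mk (L1 ++ A :: L2) R s)) :
      Step (mk (L1 ++ A :: L2) R s) (mk (L1 ++ Ar.leftOpts ++ L2) R s)
  | revR {R1 R2 : List SGame} {L : List SGame} {s : ℝ} {D Dl : SGame}
      (hDl : Dl ∈ D.leftOpts) (h : Ge Dl (mk L (R1 ++ D :: R2) s)) :
      Step (mk L (R1 ++ D :: R2) s) (mk L (R1 ++ Dl.rightOpts ++ R2) s)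
  | congL {g g' : SGame} {L1 L2 R : List SGame} {s : ℝ} (h : Step g g') :
      Step (mk (L1 ++ g :: L2) R s) (mk (L1 ++ g' :: L2) R s)
  | congR {g g' : SGame} {L R1 R2 : List SGame} {s : ℝ} (h : Step g g') :
      Step (mk L (R1 ++ g :: R2) s) (mk L (R1 ++ g' :: R2) s)

end SGame

namespace SGame

/-! ### max/min list lemmas -/

lemma maxRight_le_iff : ∀ (g : SGame) (l : List SGame) (v : ℝ),
    maxRight g l ≤ v ↔ ∀ x ∈ g :: l, rightScore x ≤ v := by
  intro g l
  induction l generalizing g with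
  | nil => intro v; rw [maxRight]; simp
  | cons h t ih => intro v; rw [maxRight]; simp [ih h v]; try tauto

lemma maxRight_mem : ∀ (g : SGame) (l : List SGame), ∃ x ∈ g :: l, maxRight g l = rightScore x := by
  intro g l
  induction l generalizing g with
  | nil => exact ⟨g, by simp, by rw [maxRight]⟩
  | cons h t ih =>
    rw [maxRight]
    rcases ih h with ⟨x, hx, he⟩
    rcases le_total (rightScore g) (maxRight h t) with hle | hle
    · exact ⟨x, by simpa using Or.inr hx, by rw [max_eq_right hle, he]⟩
    · exact ⟨g, by simp, by rw [max_eq_left hle]⟩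

lemma le_minLeft_iff : ∀ (g : SGame) (l : List SGame) (v : ℝ),
    v ≤ minLeft g l ↔ ∀ x ∈ g :: l, v ≤ leftScore x := by
  intro g l
  induction l generalizing g with
  | nil => intro v; rw [minLeft]; simp
  | cons h t ih => intro v; rw [minLeft]; simp [ih h v]; try tauto

lemma minLeft_mem : ∀ (g : SGame) (l : List SGame), ∃ x ∈ g :: l, minLeft g l = leftScore x := by
  intro g l
  induction l generalizing g with
  | nil => exact ⟨g, by simp, by rw [minLeft]⟩
  | cons h t ih =>
    rw [minLeft]
    rcases ih h with ⟨x, hx, he⟩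
    rcases le_total (minLeft h t) (leftScore g) with hle | hle
    · exact ⟨x, by simpa using Or.inr hx, by rw [min_eq_right hle, he]⟩
    · exact ⟨g, by simp, by rw [min_eq_left hle]⟩

/-! ### leftScore/rightScore of mk -/

lemma lS_nil (R : List SGame) (s : ℝ) : leftScore (mk [] R s) = s := by rw [leftScore]
lemma rS_nil (L : List SGame) (s : ℝ) : rightScore (mk L [] s) = s := by rw [rightScore]

lemma le_lS {L : List SGame} {o : SGame} (R : List SGame) (s : ℝ) (ho : o ∈ L) :
    rightScore o ≤ leftScore (mk L R s) := by
  match L, ho with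
  | g :: l, ho => rw [leftScore]; exact (maxRight_le_iff g l _).mp le_rfl o ho

lemma rS_le {R : List SGame} {o : SGame} (L : List SGame) (s : ℝ) (ho : o ∈ R) :
    rightScore (mk L R s) ≤ leftScore o := by
  match R, ho with
  | g :: l, ho => rw [rightScore]; exact (le_minLeft_iff g l _).mp le_rfl o ho

lemma lS_mem {L : List SGame} (R : List SGame) (s : ℝ) (hL : L ≠ []) :
    ∃ o ∈ L, leftScore (mk L R s) = rightScore o := by
  match L, hL with
  | g :: l, _ => rw [leftScore]; exact maxRight_mem g l

lemma rS_mem {R : List SGame} (L : List SGame) (s : ℝ) (hR : R ≠ []) :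
    ∃ o ∈ R, rightScore (mk L R s) = leftScore o := by
  match R, hR with
  | g :: l, _ => rw [rightScore]; exact minLeft_mem g l

lemma lS_lt {L : List SGame} {v : ℝ} (R : List SGame) (s : ℝ) (hL : L ≠ [])
    (h : ∀ o ∈ L, rightScore o < v) : leftScore (mk L R s) < v := by
  rcases lS_mem R s hL with ⟨o, ho, he⟩
  rw [he]; exact h o ho

lemma lS_le {L : List SGame} {v : ℝ} (R : List SGame) (s : ℝ) (hL : L ≠ [])
    (h : ∀ o ∈ L, rightScore o ≤ v) : leftScore (mk L R s) ≤ v := by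
  rcases lS_mem R s hL with ⟨o, ho, he⟩
  rw [he]; exact h o ho

lemma lt_rS {R : List SGame} {v : ℝ} (L : List SGame) (s : ℝ) (hR : R ≠ [])
    (h : ∀ o ∈ R, v < leftScore o) : v < rightScore (mk L R s) := by
  rcases rS_mem L s hR with ⟨o, ho, he⟩
  rw [he]; exact h o ho

lemma le_rS {R : List SGame} {v : ℝ} (L : List SGame) (s : ℝ) (hR : R ≠ [])
    (h : ∀ o ∈ R, v ≤ leftScore o) : v ≤ rightScore (mk L R s) := by
  rcases rS_mem L s hR with ⟨o, ho, he⟩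
  rw [he]; exact h o ho

end SGame
namespace SGame

lemma sum_def (L1 R1 L2 R2 : List SGame) (s1 s2 : ℝ) :
    sum (mk L1 R1 s1) (mk L2 R2 s2) =
    mk (L1.map (fun g => sum g (mk L2 R2 s2)) ++ L2.map (fun h => sum (mk L1 R1 s1) h))
       (R1.map (fun g => sum g (mk L2 R2 s2)) ++ R2.map (fun h => sum (mk L1 R1 s1) h))
       (s1 + s2) := by
  rw [sum]
  rw [List.attach_map_val (l := L1) (f := fun g => sum g (mk L2 R2 s2)),
      List.attach_map_val (l := L2) (f := fun h => sum (mk L1 R1 s1) h),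
      List.attach_map_val (l := R1) (f := fun g => sum g (mk L2 R2 s2)),
      List.attach_map_val (l := R2) (f := fun h => sum (mk L1 R1 s1) h)]

/-- Score of a sum when Left is stuck. -/
lemma lS_sum_stuck {L1 R1 L2 R2 : List SGame} {s1 s2 : ℝ} (h1 : L1 = []) (h2 : L2 = []) :
    leftScore (sum (mk L1 R1 s1) (mk L2 R2 s2)) = s1 + s2 := by
  subst h1; subst h2; rw [sum_def]; simp [lS_nil]

lemma rS_sum_stuck {L1 R1 L2 R2 : List SGame} {s1 s2 : ℝ} (h1 : R1 = []) (h2 : R2 = []) :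
    rightScore (sum (mk L1 R1 s1) (mk L2 R2 s2)) = s1 + s2 := by
  subst h1; subst h2; rw [sum_def]; simp [rS_nil]

/-- Lower bound on leftScore of a sum via a Left option in the first component. -/
lemma le_lS_sum₁ {L1 R1 L2 R2 : List SGame} {s1 s2 : ℝ} {A : SGame} (hA : A ∈ L1) :
    rightScore (sum A (mk L2 R2 s2)) ≤ leftScore (sum (mk L1 R1 s1) (mk L2 R2 s2)) := by
  rw [sum_def]
  exact le_lS _ _ (by simp only [List.mem_append, List.mem_map]; exact Or.inl ⟨A, hA, rfl⟩)

lemma le_lS_sum₂ {L1 R1 L2 R2 : List SGame} {s1 s2 : ℝ} {x : SGame} (hx : x ∈ L2) :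
    rightScore (sum (mk L1 R1 s1) x) ≤ leftScore (sum (mk L1 R1 s1) (mk L2 R2 s2)) := by
  rw [sum_def]
  exact le_lS _ _ (by simp only [List.mem_append, List.mem_map]; exact Or.inr ⟨x, hx, rfl⟩)

lemma rS_sum_le₁ {L1 R1 L2 R2 : List SGame} {s1 s2 : ℝ} {D : SGame} (hD : D ∈ R1) :
    rightScore (sum (mk L1 R1 s1) (mk L2 R2 s2)) ≤ leftScore (sum D (mk L2 R2 s2)) := by
  rw [sum_def]
  exact rS_le _ _ (by simp only [List.mem_append, List.mem_map]; exact Or.inl ⟨D, hD, rfl⟩)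

lemma rS_sum_le₂ {L1 R1 L2 R2 : List SGame} {s1 s2 : ℝ} {x : SGame} (hx : x ∈ R2) :
    rightScore (sum (mk L1 R1 s1) (mk L2 R2 s2)) ≤ leftScore (sum (mk L1 R1 s1) x) := by
  rw [sum_def]
  exact rS_le _ _ (by simp only [List.mem_append, List.mem_map]; exact Or.inr ⟨x, hx, rfl⟩)

/-- Upper bound on leftScore of a sum: all options bounded. -/
lemma lS_sum_lt {L1 R1 L2 R2 : List SGame} {s1 s2 : ℝ} {v : ℝ}
    (hne : L1 ≠ [] ∨ L2 ≠ [])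
    (h1 : ∀ A ∈ L1, rightScore (sum A (mk L2 R2 s2)) < v)
    (h2 : ∀ x ∈ L2, rightScore (sum (mk L1 R1 s1) x) < v) :
    leftScore (sum (mk L1 R1 s1) (mk L2 R2 s2)) < v := by
  rw [sum_def]
  apply lS_lt _ _ (by rcases hne with h | h <;> simp [h])
  intro o ho
  simp only [List.mem_append, List.mem_map] at ho
  rcases ho with ⟨A, hA, rfl⟩ | ⟨x, hx, rfl⟩
  · exact h1 A hA
  · exact h2 x hx

lemma lS_sum_le' {L1 R1 L2 R2 : List SGame} {s1 s2 : ℝ} {v : ℝ}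
    (hne : L1 ≠ [] ∨ L2 ≠ [])
    (h1 : ∀ A ∈ L1, rightScore (sum A (mk L2 R2 s2)) ≤ v)
    (h2 : ∀ x ∈ L2, rightScore (sum (mk L1 R1 s1) x) ≤ v) :
    leftScore (sum (mk L1 R1 s1) (mk L2 R2 s2)) ≤ v := by
  rw [sum_def]
  apply lS_le _ _ (by rcases hne with h | h <;> simp [h])
  intro o ho
  simp only [List.mem_append, List.mem_map] at ho
  rcases ho with ⟨A, hA, rfl⟩ | ⟨x, hx, rfl⟩
  · exact h1 A hA
  · exact h2 x hx

lemma lt_rS_sum {L1 R1 L2 R2 : List SGame} {s1 s2 : ℝ} {v : ℝ}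
    (hne : R1 ≠ [] ∨ R2 ≠ [])
    (h1 : ∀ D ∈ R1, v < leftScore (sum D (mk L2 R2 s2)))
    (h2 : ∀ x ∈ R2, v < leftScore (sum (mk L1 R1 s1) x)) :
    v < rightScore (sum (mk L1 R1 s1) (mk L2 R2 s2)) := by
  rw [sum_def]
  apply lt_rS _ _ (by rcases hne with h | h <;> simp [h])
  intro o ho
  simp only [List.mem_append, List.mem_map] at ho
  rcases ho with ⟨D, hD, rfl⟩ | ⟨x, hx, rfl⟩
  · exact h1 D hD
  · exact h2 x hx

lemma le_rS_sum {L1 R1 L2 R2 : List SGame} {s1 s2 : ℝ} {v : ℝ}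
    (hne : R1 ≠ [] ∨ R2 ≠ [])
    (h1 : ∀ D ∈ R1, v ≤ leftScore (sum D (mk L2 R2 s2)))
    (h2 : ∀ x ∈ R2, v ≤ leftScore (sum (mk L1 R1 s1) x)) :
    v ≤ rightScore (sum (mk L1 R1 s1) (mk L2 R2 s2)) := by
  rw [sum_def]
  apply le_rS _ _ (by rcases hne with h | h <;> simp [h])
  intro o ho
  simp only [List.mem_append, List.mem_map] at ho
  rcases ho with ⟨D, hD, rfl⟩ | ⟨x, hx, rfl⟩
  · exact h1 D hD
  · exact h2 x hx

/-- Attained option of a sum (left). -/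
lemma lS_sum_mem {L1 R1 L2 R2 : List SGame} {s1 s2 : ℝ} (hne : L1 ≠ [] ∨ L2 ≠ []) :
    (∃ A ∈ L1, leftScore (sum (mk L1 R1 s1) (mk L2 R2 s2)) = rightScore (sum A (mk L2 R2 s2))) ∨
    (∃ x ∈ L2, leftScore (sum (mk L1 R1 s1) (mk L2 R2 s2)) = rightScore (sum (mk L1 R1 s1) x)) := by
  rw [sum_def]
  rcases lS_mem (L := (L1.map (fun g => sum g (mk L2 R2 s2)) ++ L2.map (fun h => sum (mk L1 R1 s1) h)))
      _ (s1 + s2) (by rcases hne with h | h <;> simp [h]) with ⟨o, ho, he⟩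
  simp only [List.mem_append, List.mem_map] at ho
  rcases ho with ⟨A, hA, rfl⟩ | ⟨x, hx, rfl⟩
  · exact Or.inl ⟨A, hA, he⟩
  · exact Or.inr ⟨x, hx, he⟩

lemma rS_sum_mem {L1 R1 L2 R2 : List SGame} {s1 s2 : ℝ} (hne : R1 ≠ [] ∨ R2 ≠ []) :
    (∃ D ∈ R1, rightScore (sum (mk L1 R1 s1) (mk L2 R2 s2)) = leftScore (sum D (mk L2 R2 s2))) ∨
    (∃ x ∈ R2, rightScore (sum (mk L1 R1 s1) (mk L2 R2 s2)) = leftScore (sum (mk L1 R1 s1) x)) := by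
  rw [sum_def]
  rcases rS_mem (R := (R1.map (fun g => sum g (mk L2 R2 s2)) ++ R2.map (fun h => sum (mk L1 R1 s1) h)))
      _ (s1 + s2) (by rcases hne with h | h <;> simp [h]) with ⟨o, ho, he⟩
  simp only [List.mem_append, List.mem_map] at ho
  rcases ho with ⟨D, hD, rfl⟩ | ⟨x, hx, rfl⟩
  · exact Or.inl ⟨D, hD, he⟩
  · exact Or.inr ⟨x, hx, he⟩

end SGame
namespace SGame

/-- A pure-score game. -/
def sc (c : ℝ) : SGame := mk [] [] c

lemma sizeOf_mem_left {A : SGame} {L R : List SGame} {s : ℝ} (h : A ∈ L) :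
    sizeOf A < sizeOf (mk L R s) := by
  have := List.sizeOf_lt_of_mem h
  simp only [mk.sizeOf_spec]; omega

lemma sizeOf_mem_right {A : SGame} {L R : List SGame} {s : ℝ} (h : A ∈ R) :
    sizeOf A < sizeOf (mk L R s) := by
  have := List.sizeOf_lt_of_mem h
  simp only [mk.sizeOf_spec]; omega

lemma sum_sc (L R : List SGame) (s c : ℝ) :
    (mk L R s).sum (sc c) =
      mk (L.map (fun g => g.sum (sc c))) (R.map (fun g => g.sum (sc c))) (s + c) := by
  rw [sc, sum_def]; simp

lemma shift_aux : ∀ (n : ℕ) (G X : SGame), sizeOf G + sizeOf X ≤ n → ∀ c,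
    leftScore (G.sum ((X.sum (sc c)))) = leftScore (G.sum X) + c ∧
    rightScore (G.sum ((X.sum (sc c)))) = rightScore (G.sum X) + c := by
  intro n
  induction n with
  | zero => intro G X h; cases G; simp only [mk.sizeOf_spec] at h; omega
  | succ n ih =>
    rintro ⟨L1, R1, s1⟩ ⟨L2, R2, s2⟩ hsz c
    have hIH1 : ∀ A ∈ L1, leftScore (A.sum ((mk L2 R2 s2).sum (sc c))) = leftScore (A.sum (mk L2 R2 s2)) + c ∧
        rightScore (A.sum ((mk L2 R2 s2).sum (sc c))) = rightScore (A.sum (mk L2 R2 s2)) + c := by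
      intro A hA
      exact ih A _ (by have := sizeOf_mem_left (R := R1) (s := s1) hA; omega) c
    have hIH1r : ∀ A ∈ R1, leftScore (A.sum ((mk L2 R2 s2).sum (sc c))) = leftScore (A.sum (mk L2 R2 s2)) + c ∧
        rightScore (A.sum ((mk L2 R2 s2).sum (sc c))) = rightScore (A.sum (mk L2 R2 s2)) + c := by
      intro A hA
      exact ih A _ (by have := sizeOf_mem_right (L := L1) (s := s1) hA; omega) c
    have hIH2 : ∀ x ∈ L2, leftScore ((mk L1 R1 s1).sum (x.sum (sc c))) = leftScore ((mk L1 R1 s1).sum x) + c ∧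
        rightScore ((mk L1 R1 s1).sum (x.sum (sc c))) = rightScore ((mk L1 R1 s1).sum x) + c := by
      intro x hx
      exact ih _ x (by have := sizeOf_mem_left (R := R2) (s := s2) hx; omega) c
    have hIH2r : ∀ x ∈ R2, leftScore ((mk L1 R1 s1).sum (x.sum (sc c))) = leftScore ((mk L1 R1 s1).sum x) + c ∧
        rightScore ((mk L1 R1 s1).sum (x.sum (sc c))) = rightScore ((mk L1 R1 s1).sum x) + c := by
      intro x hx
      exact ih _ x (by have := sizeOf_mem_right (L := L2) (s := s2) hx; omega) c
    rw [sum_sc] at hIH1 hIH1r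
    rw [sum_sc]
    constructor
    · -- leftScore
      by_cases hL : L1 = [] ∧ L2 = []
      · rw [lS_sum_stuck hL.1 (by simp [hL.2]), lS_sum_stuck hL.1 hL.2]; ring
      · have hne : L1 ≠ [] ∨ L2 ≠ [] := by tauto
        have hne' : L1 ≠ [] ∨ L2.map (fun g => g.sum (sc c)) ≠ [] := by
          rcases hne with h | h
          · exact Or.inl h
          · exact Or.inr (by simpa using h)
        apply le_antisymm
        · apply lS_sum_le' hne'
          · intro A hA
            rw [(hIH1 A hA).2]
            have := le_lS_sum₁ (L1 := L1) (R1 := R1) (s1 := s1) (L2 := L2) (R2 := R2) (s2 := s2) hA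
            linarith
          · intro x' hx'
            simp only [List.mem_map] at hx'
            rcases hx' with ⟨x, hx, rfl⟩
            rw [(hIH2 x hx).2]
            have := le_lS_sum₂ (L1 := L1) (R1 := R1) (s1 := s1) (L2 := L2) (R2 := R2) (s2 := s2) hx
            linarith
        · rcases lS_sum_mem (R1 := R1) (s1 := s1) (R2 := R2) (s2 := s2) hne with ⟨A, hA, he⟩ | ⟨x, hx, he⟩
          · rw [he, ← (hIH1 A hA).2]
            exact le_lS_sum₁ hA
          · rw [he, ← (hIH2 x hx).2]
            exact le_lS_sum₂ (by simp only [List.mem_map]; exact ⟨x, hx, rfl⟩)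
    · -- rightScore
      by_cases hR : R1 = [] ∧ R2 = []
      · rw [rS_sum_stuck hR.1 (by simp [hR.2]), rS_sum_stuck hR.1 hR.2]; ring
      · have hne : R1 ≠ [] ∨ R2 ≠ [] := by tauto
        have hne' : R1 ≠ [] ∨ R2.map (fun g => g.sum (sc c)) ≠ [] := by
          rcases hne with h | h
          · exact Or.inl h
          · exact Or.inr (by simpa using h)
        apply le_antisymm
        · rcases rS_sum_mem (L1 := L1) (s1 := s1) (L2 := L2) (s2 := s2) hne with ⟨D, hD, he⟩ | ⟨x, hx, he⟩
          · rw [he, ← (hIH1r D hD).1]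
            exact rS_sum_le₁ hD
          · rw [he, ← (hIH2r x hx).1]
            exact rS_sum_le₂ (by simp only [List.mem_map]; exact ⟨x, hx, rfl⟩)
        · apply le_rS_sum hne'
          · intro D hD
            rw [(hIH1r D hD).1]
            have := rS_sum_le₁ (L1 := L1) (R1 := R1) (s1 := s1) (L2 := L2) (R2 := R2) (s2 := s2) hD
            linarith
          · intro x' hx'
            simp only [List.mem_map] at hx'
            rcases hx' with ⟨x, hx, rfl⟩
            rw [(hIH2r x hx).1]
            have := rS_sum_le₂ (L1 := L1) (R1 := R1) (s1 := s1) (L2 := L2) (R2 := R2) (s2 := s2) hx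
            linarith

lemma lS_shift (G X : SGame) (c : ℝ) :
    leftScore (G.sum ((X.sum (sc c)))) = leftScore (G.sum X) + c :=
  (shift_aux _ G X le_rfl c).1

lemma rS_shift (G X : SGame) (c : ℝ) :
    rightScore (G.sum ((X.sum (sc c)))) = rightScore (G.sum X) + c :=
  (shift_aux _ G X le_rfl c).2

/-- Plain shift: summing with a pure-score game. -/
lemma shift_aux' : ∀ (n : ℕ) (G : SGame), sizeOf G ≤ n → ∀ c,
    leftScore (G.sum (sc c)) = leftScore G + c ∧
    rightScore (G.sum (sc c)) = rightScore G + c := by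
  intro n
  induction n with
  | zero => intro G h; cases G; simp only [mk.sizeOf_spec] at h; omega
  | succ n ih =>
    rintro ⟨L, R, s⟩ hsz c
    rw [sum_sc]
    constructor
    · by_cases hL : L = []
      · subst hL; simp [lS_nil]
      · apply le_antisymm
        · apply lS_le _ _ (by simpa using hL)
          intro o ho
          simp only [List.mem_map] at ho
          rcases ho with ⟨A, hA, rfl⟩
          rw [(ih A (by have := sizeOf_mem_left (R := R) (s := s) hA; omega) c).2]
          have := le_lS (L := L) (o := A) R s hA
          linarith
        · rcases lS_mem (L := L) R s hL with ⟨A, hA, he⟩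
          rw [he, ← (ih A (by have := sizeOf_mem_left (R := R) (s := s) hA; omega) c).2]
          exact le_lS _ _ (by simp only [List.mem_map]; exact ⟨A, hA, rfl⟩)
    · by_cases hR : R = []
      · subst hR; simp [rS_nil]
      · apply le_antisymm
        · rcases rS_mem (R := R) L s hR with ⟨D, hD, he⟩
          rw [he, ← (ih D (by have := sizeOf_mem_right (L := L) (s := s) hD; omega) c).1]
          exact rS_le _ _ (by simp only [List.mem_map]; exact ⟨D, hD, rfl⟩)
        · apply le_rS _ _ (by simpa using hR)
          intro o ho
          simp only [List.mem_map] at ho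
          rcases ho with ⟨D, hD, rfl⟩
          rw [(ih D (by have := sizeOf_mem_right (L := L) (s := s) hD; omega) c).1]
          have := rS_le (R := R) (o := D) L s hD
          linarith

lemma lS_shift' (G : SGame) (c : ℝ) : leftScore (G.sum (sc c)) = leftScore G + c :=
  (shift_aux' _ G le_rfl c).1

lemma rS_shift' (G : SGame) (c : ℝ) : rightScore (G.sum (sc c)) = rightScore G + c :=
  (shift_aux' _ G le_rfl c).2

end SGame
namespace SGame

noncomputable def ocf (a b : ℝ) : Outcome :=
  if 0 < a then (if 0 < b then .L else if b = 0 then .L else .N)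
  else if a = 0 then (if 0 < b then .L else if b = 0 then .T else .R)
  else (if 0 < b then .P else .R)

lemma outcome_eq (K : SGame) : outcome K = ocf (leftScore K) (rightScore K) := rfl

lemma ocf_LT (a b : ℝ) : (ocf a b = .L ∨ ocf a b = .T) ↔ (0 ≤ a ∧ 0 ≤ b) := by
  unfold ocf
  split_ifs <;> simp <;> (try constructor) <;> try intro hh
  all_goals first
  | linarith
  | exact lt_of_le_of_ne (not_lt.mp ‹¬0 < b›) ‹¬b = 0›
  | exact lt_of_le_of_ne (not_lt.mp ‹¬0 < a›) ‹¬a = 0›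
  | exact absurd (le_antisymm (not_lt.mp ‹¬0 < a›) hh) ‹¬a = 0›
  | exact absurd (le_antisymm (not_lt.mp ‹¬0 < b›) hh) ‹¬b = 0›

lemma ocf_RT (a b : ℝ) : (ocf a b = .R ∨ ocf a b = .T) ↔ (a ≤ 0 ∧ b ≤ 0) := by
  unfold ocf
  split_ifs <;> simp <;> (try constructor) <;> try intro hh
  all_goals first
  | linarith
  | exact lt_of_le_of_ne (not_lt.mp ‹¬0 < b›) ‹¬b = 0›
  | exact lt_of_le_of_ne (not_lt.mp ‹¬0 < a›) ‹¬a = 0›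
  | exact absurd (le_antisymm (not_lt.mp ‹¬0 < a›) hh) ‹¬a = 0›
  | exact absurd (le_antisymm (not_lt.mp ‹¬0 < b›) hh) ‹¬b = 0›

lemma ocf_P (a b : ℝ) : ocf a b = .P ↔ (a < 0 ∧ 0 < b) := by
  unfold ocf
  split_ifs <;> simp <;> (try constructor) <;> try intro hh
  all_goals first
  | linarith
  | exact lt_of_le_of_ne (not_lt.mp ‹¬0 < b›) ‹¬b = 0›
  | exact lt_of_le_of_ne (not_lt.mp ‹¬0 < a›) ‹¬a = 0›
  | exact absurd (le_antisymm (not_lt.mp ‹¬0 < a›) hh) ‹¬a = 0›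
  | exact absurd (le_antisymm (not_lt.mp ‹¬0 < b›) hh) ‹¬b = 0›

lemma scan {a b a' b' : ℝ} (h : ∀ c : ℝ, ocf (a + c) (b + c) = ocf (a' + c) (b' + c)) :
    a = a' ∧ b = b' := by
  have hLT : ∀ c, (0 ≤ a + c ∧ 0 ≤ b + c) ↔ (0 ≤ a' + c ∧ 0 ≤ b' + c) := by
    intro c; rw [← ocf_LT, ← ocf_LT, h c]
  have hRT : ∀ c, (a + c ≤ 0 ∧ b + c ≤ 0) ↔ (a' + c ≤ 0 ∧ b' + c ≤ 0) := by
    intro c; rw [← ocf_RT, ← ocf_RT, h c]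
  have hP : ∀ c, (a + c < 0 ∧ 0 < b + c) ↔ (a' + c < 0 ∧ 0 < b' + c) := by
    intro c; rw [← ocf_P, ← ocf_P, h c]
  have hmin : min a b = min a' b' := by
    apply le_antisymm
    · have := (hLT (-(min a b))).mp
        ⟨by linarith [min_le_left a b], by linarith [min_le_right a b]⟩
      have h1 := this.1; have h2 := this.2
      rcases le_total a' b' with hc | hc
      · rw [min_eq_left hc]; linarith [min_le_left a b, min_le_right a b]
      · rw [min_eq_right hc]; linarith
    · have := (hLT (-(min a' b'))).mpr
        ⟨by linarith [min_le_left a' b'], by linarith [min_le_right a' b']⟩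
      have h1 := this.1; have h2 := this.2
      rcases le_total a b with hc | hc
      · rw [min_eq_left hc]; linarith
      · rw [min_eq_right hc]; linarith
  have hmax : max a b = max a' b' := by
    apply le_antisymm
    · have := (hRT (-(max a' b'))).mpr
        ⟨by linarith [le_max_left a' b'], by linarith [le_max_right a' b']⟩
      have h1 := this.1; have h2 := this.2
      rcases le_total a b with hc | hc
      · rw [max_eq_right hc]; linarith
      · rw [max_eq_left hc]; linarith
    · have := (hRT (-(max a b))).mp
        ⟨by linarith [le_max_left a b], by linarith [le_max_right a b]⟩
      have h1 := this.1; have h2 := this.2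
      rcases le_total a' b' with hc | hc
      · rw [max_eq_right hc]; linarith
      · rw [max_eq_left hc]; linarith
  rcases lt_trichotomy a b with hab | hab | hab
  · have hPc := (hP (-(a + b) / 2)).mp ⟨by linarith, by linarith⟩
    have ha' : a' < b' := by linarith [hPc.1, hPc.2]
    rw [min_eq_left hab.le, min_eq_left ha'.le] at hmin
    rw [max_eq_right hab.le, max_eq_right ha'.le] at hmax
    exact ⟨hmin, hmax⟩
  · subst hab
    rw [min_self] at hmin
    rw [max_self] at hmax
    constructor
    · apply le_antisymm
      · rw [hmin]; exact min_le_left a' b'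
      · rw [hmax]; exact le_max_left a' b'
    · apply le_antisymm
      · rw [hmin]; exact min_le_right a' b'
      · rw [hmax]; exact le_max_right a' b'
  · have hPc' := (hP (-(a + b) / 2))
    have hnb : ¬ (a' + -(a + b) / 2 < 0 ∧ 0 < b' + -(a + b) / 2) := by
      intro hc
      have := hPc'.mpr hc
      linarith [this.1, this.2]
    have ha' : ¬ a' < b' := by
      intro hc
      apply hnb
      have h1 : min a' b' = a' := min_eq_left hc.le
      have h2 : max a' b' = b' := max_eq_right hc.le
      rw [min_eq_right hab.le] at hmin
      rw [max_eq_left hab.le] at hmax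
      constructor <;> [linarith [hmin ▸ h1]; linarith [hmax ▸ h2]]
    push_neg at ha'
    rw [min_eq_right hab.le, min_eq_right ha'] at hmin
    rw [max_eq_left hab.le, max_eq_left ha'] at hmax
    exact ⟨hmax, hmin⟩

/-- `G` and `H` have the same left- and right-scores in every context. -/
def ValEq (G H : SGame) : Prop :=
  ∀ X : SGame, leftScore (G.sum X) = leftScore (H.sum X) ∧
    rightScore (G.sum X) = rightScore (H.sum X)

lemma valEq_of_gameEq {G H : SGame} (h : gameEq G H) : ValEq G H := by
  intro X
  apply scan
  intro c
  have := h (X.sum (sc c))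
  rw [outcome_eq, outcome_eq, lS_shift, rS_shift, lS_shift, rS_shift] at this
  exact this

lemma valEq_symm {G H : SGame} (h : ValEq G H) : ValEq H G :=
  fun X => ⟨(h X).1.symm, (h X).2.symm⟩

lemma ge_trans' {A B C : SGame} (h1 : Ge A B) (h2 : Ge B C) : Ge A C := by
  intro X
  exact ⟨fun h => (h1 X).1 ((h2 X).1 h), fun h => (h1 X).2.1 ((h2 X).2.1 h),
    fun h => (h1 X).2.2.1 ((h2 X).2.2.1 h), fun h => (h1 X).2.2.2 ((h2 X).2.2.2 h)⟩

lemma le_trans' {A B C : SGame} (h1 : Le A B) (h2 : Le B C) : Le A C := by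
  intro X
  exact ⟨fun h => (h1 X).1 ((h2 X).1 h), fun h => (h1 X).2.1 ((h2 X).2.1 h),
    fun h => (h1 X).2.2.1 ((h2 X).2.2.1 h), fun h => (h1 X).2.2.2 ((h2 X).2.2.2 h)⟩

lemma ge_ge_valEq {A B : SGame} (h1 : Ge A B) (h2 : Ge B A) : ValEq A B := by
  intro X
  constructor
  · apply le_antisymm
    · have := (h2 (X.sum (sc (-(leftScore (A.sum X)))))).1
      rw [lS_shift, lS_shift] at this
      linarith [this (by linarith)]
    · have := (h1 (X.sum (sc (-(leftScore (B.sum X)))))).1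
      rw [lS_shift, lS_shift] at this
      linarith [this (by linarith)]
  · apply le_antisymm
    · have := (h2 (X.sum (sc (-(rightScore (A.sum X)))))).2.1
      rw [rS_shift, rS_shift] at this
      linarith [this (by linarith)]
    · have := (h1 (X.sum (sc (-(rightScore (B.sum X)))))).2.1
      rw [rS_shift, rS_shift] at this
      linarith [this (by linarith)]

lemma le_le_valEq {A B : SGame} (h1 : Le A B) (h2 : Le B A) : ValEq A B := by
  intro X
  constructor
  · apply le_antisymm
    · have := (h1 (X.sum (sc (-(leftScore (B.sum X)))))).1
      rw [lS_shift, lS_shift] at this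
      linarith [this (by linarith)]
    · have := (h2 (X.sum (sc (-(leftScore (A.sum X)))))).1
      rw [lS_shift, lS_shift] at this
      linarith [this (by linarith)]
  · apply le_antisymm
    · have := (h1 (X.sum (sc (-(rightScore (B.sum X)))))).2.1
      rw [rS_shift, rS_shift] at this
      linarith [this (by linarith)]
    · have := (h2 (X.sum (sc (-(rightScore (A.sum X)))))).2.1
      rw [rS_shift, rS_shift] at this
      linarith [this (by linarith)]

/-- `Le D ·` only depends on the value of the second argument. -/
lemma le_congr_right {D G H : SGame} (hv : ValEq G H) (h : Le D G) : Le D H := by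
  intro X
  rw [← (hv X).1, ← (hv X).2]
  exact h X

lemma ge_congr_right {D G H : SGame} (hv : ValEq G H) (h : Ge D G) : Ge D H := by
  intro X
  rw [← (hv X).1, ← (hv X).2]
  exact h X

/-- Extract a strict separating context from `¬ Ge B A`. -/
lemma notGe_sep {A B : SGame} (h : ¬ Ge B A) :
    ∃ Z, (leftScore (B.sum Z) < 0 ∧ 0 < leftScore (A.sum Z)) ∨
         (rightScore (B.sum Z) < 0 ∧ 0 < rightScore (A.sum Z)) := by
  rw [Ge] at h
  push_neg at h
  obtain ⟨X, hX⟩ := h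
  by_cases c1 : 0 ≤ leftScore (A.sum X) ∧ ¬ 0 ≤ leftScore (B.sum X)
  · refine ⟨X.sum (sc (-(leftScore (B.sum X)) / 2)), Or.inl ?_⟩
    rw [lS_shift, lS_shift]
    push_neg at c1
    constructor <;> linarith [c1.1, c1.2]
  by_cases c2 : 0 ≤ rightScore (A.sum X) ∧ ¬ 0 ≤ rightScore (B.sum X)
  · refine ⟨X.sum (sc (-(rightScore (B.sum X)) / 2)), Or.inr ?_⟩
    rw [rS_shift, rS_shift]
    push_neg at c2
    constructor <;> linarith [c2.1, c2.2]
  by_cases c3 : 0 < leftScore (A.sum X) ∧ ¬ 0 < leftScore (B.sum X)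
  · refine ⟨X.sum (sc (-(leftScore (A.sum X)) / 2)), Or.inl ?_⟩
    rw [lS_shift, lS_shift]
    push_neg at c3
    constructor <;> linarith [c3.1, c3.2]
  · push_neg at c1 c2 c3
    have c4 := hX c1 c2 c3
    refine ⟨X.sum (sc (-(rightScore (A.sum X)) / 2)), Or.inr ?_⟩
    rw [rS_shift, rS_shift]
    constructor <;> linarith [c4.1, c4.2]

/-- Extract a strict separating context from `¬ Le D H`. -/
lemma notLe_sep {D H : SGame} (h : ¬ Le D H) :
    ∃ W, (leftScore (H.sum W) < 0 ∧ 0 < leftScore (D.sum W)) ∨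
         (rightScore (H.sum W) < 0 ∧ 0 < rightScore (D.sum W)) := by
  rw [Le] at h
  push_neg at h
  obtain ⟨X, hX⟩ := h
  by_cases c1 : leftScore (H.sum X) ≤ 0 ∧ ¬ leftScore (D.sum X) ≤ 0
  · refine ⟨X.sum (sc (-(leftScore (D.sum X)) / 2)), Or.inl ?_⟩
    rw [lS_shift, lS_shift]
    push_neg at c1
    constructor <;> linarith [c1.1, c1.2]
  by_cases c2 : rightScore (H.sum X) ≤ 0 ∧ ¬ rightScore (D.sum X) ≤ 0
  · refine ⟨X.sum (sc (-(rightScore (D.sum X)) / 2)), Or.inr ?_⟩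
    rw [rS_shift, rS_shift]
    push_neg at c2
    constructor <;> linarith [c2.1, c2.2]
  by_cases c3 : leftScore (H.sum X) < 0 ∧ ¬ leftScore (D.sum X) < 0
  · refine ⟨X.sum (sc (-(leftScore (H.sum X)) / 2)), Or.inl ?_⟩
    rw [lS_shift, lS_shift]
    push_neg at c3
    constructor <;> linarith [c3.1, c3.2]
  · push_neg at c1 c2 c3
    have c4 := hX c1 c2 c3
    refine ⟨X.sum (sc (-(rightScore (H.sum X)) / 2)), Or.inr ?_⟩
    rw [rS_shift, rS_shift]
    constructor <;> linarith [c4.1, c4.2]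

end SGame
namespace SGame

lemma exists_ub (l : List SGame) : ∃ M : ℝ, ∀ g ∈ l, leftScore g < M := by
  induction l with
  | nil => exact ⟨0, by simp⟩
  | cons g t ih =>
    obtain ⟨M, hM⟩ := ih
    refine ⟨max M (leftScore g + 1), ?_⟩
    intro x hx
    rcases List.mem_cons.mp hx with rfl | hx
    · exact lt_of_lt_of_le (by linarith) (le_max_right _ _)
    · exact lt_of_lt_of_le (hM x hx) (le_max_left _ _)

lemma exists_lb (l : List SGame) : ∃ m : ℝ, ∀ g ∈ l, m < rightScore g := by
  induction l with
  | nil => exact ⟨0, by simp⟩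
  | cons g t ih =>
    obtain ⟨m, hm⟩ := ih
    refine ⟨min m (rightScore g - 1), ?_⟩
    intro x hx
    rcases List.mem_cons.mp hx with rfl | hx
    · exact lt_of_le_of_lt (min_le_right _ _) (by linarith)
    · exact lt_of_le_of_lt (min_le_left _ _) (hm x hx)

/-- From `¬ Ge B A` produce a Left-to-move gadget separating `A` from `B`. -/
lemma gadgetX {A B : SGame} (h : ¬ Ge B A) :
    ∃ x, leftScore (B.sum x) < 0 ∧ 0 < leftScore (A.sum x) := by
  rcases notGe_sep h with ⟨Z, ⟨h1, h2⟩ | ⟨h1, h2⟩⟩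
  · exact ⟨Z, h1, h2⟩
  · obtain ⟨LB, RB, sB⟩ := B
    obtain ⟨M, hM⟩ := exists_ub LB
    refine ⟨mk [Z] [sc (-M)] 0, ?_, ?_⟩
    · apply lS_sum_lt (Or.inr (by simp))
      · intro B' hB'
        obtain ⟨LB', RB', sB'⟩ := B'
        have hb := rS_sum_le₂ (L1 := LB') (R1 := RB') (s1 := sB')
            (L2 := [Z]) (R2 := [sc (-M)]) (s2 := (0:ℝ)) (x := sc (-M)) (by simp)
        have hs := lS_shift' (mk LB' RB' sB') (-M)
        have := hM _ hB'
        linarith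
      · intro z hz
        rcases List.mem_singleton.mp hz with rfl
        exact h1
    · calc (0:ℝ) < rightScore (A.sum Z) := h2
      _ ≤ _ := by
          obtain ⟨LA, RA, sA⟩ := A
          exact le_lS_sum₂ (by simp)

/-- From `¬ Le D H` produce a Right-to-move gadget separating `D` from `H`. -/
lemma gadgetW {D H : SGame} (h : ¬ Le D H) :
    ∃ w, rightScore (H.sum w) < 0 ∧ 0 < rightScore (D.sum w) := by
  rcases notLe_sep h with ⟨W, ⟨h1, h2⟩ | ⟨h1, h2⟩⟩
  · obtain ⟨LD, RD, sD⟩ := D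
    obtain ⟨m, hm⟩ := exists_lb RD
    refine ⟨mk [sc (-m)] [W] 0, ?_, ?_⟩
    · calc rightScore (H.sum (mk [sc (-m)] [W] 0)) ≤ leftScore (H.sum W) := by
            obtain ⟨LH, RH, sH⟩ := H
            exact rS_sum_le₂ (by simp)
      _ < 0 := h1
    · apply lt_rS_sum (Or.inr (by simp))
      · intro Dr hDr
        obtain ⟨LDr, RDr, sDr⟩ := Dr
        have hb := le_lS_sum₂ (L1 := LDr) (R1 := RDr) (s1 := sDr)
            (L2 := [sc (-m)]) (R2 := [W]) (s2 := (0:ℝ)) (x := sc (-m)) (by simp)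
        have hs := rS_shift' (mk LDr RDr sDr) (-m)
        have := hm _ hDr
        linarith
      · intro z hz
        rcases List.mem_singleton.mp hz with rfl
        exact h2
  · exact ⟨W, h1, h2⟩

end SGame
namespace SGame

lemma rightOpts_mk (L R : List SGame) (s : ℝ) : rightOpts (mk L R s) = R := rfl
lemma leftOpts_mk (L R : List SGame) (s : ℝ) : leftOpts (mk L R s) = L := rfl

/-- Key lemma, Left version: if `G` and `H` are value-equivalent, `A` is a Left
option of `G` none of whose Right options reverses through `H`, then some Left
option of `H` dominates `A`. -/
lemma keyL {LG RG : List SGame} {sG : ℝ} {LH RH : List SGame} {sH : ℝ} {A : SGame}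
    (hv : ValEq (mk LG RG sG) (mk LH RH sH)) (hA : A ∈ LG)
    (hNR : ∀ Ar ∈ A.rightOpts, ¬ Le Ar (mk LH RH sH)) :
    ∃ B ∈ LH, Ge B A := by
  by_contra hc
  push_neg at hc
  obtain ⟨LA, RA, sA⟩ := A
  rw [rightOpts_mk] at hNR
  by_cases hcor : RA = [] ∧ LH = []
  · -- corner: A has no Right options and H has no Left options
    obtain ⟨hRA, hLH⟩ := hcor
    set c := leftScore (mk LA RA sA) - sH - 1 with hc_def
    have h1 : leftScore ((mk LH RH sH).sum (mk [] [zero] c)) = sH + c :=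
      lS_sum_stuck hLH rfl
    have h2 : rightScore ((mk LA RA sA).sum (mk [] [zero] c)) > sH + c := by
      apply lt_rS_sum (Or.inr (by simp))
      · intro Dr hDr; rw [hRA] at hDr; simp at hDr
      · intro z hz
        rcases List.mem_singleton.mp hz with rfl
        have : leftScore ((mk LA RA sA).sum zero) = leftScore (mk LA RA sA) := by
          have := lS_shift' (mk LA RA sA) 0
          simpa [sc, zero] using this
        rw [this]; rw [hc_def]; ring_nf; linarith
    have h3 := le_lS_sum₁ (R1 := RG) (s1 := sG) (L2 := []) (R2 := [zero]) (s2 := c) hA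
    have h4 := (hv (mk [] [zero] c)).1
    linarith
  · -- main case
    have hne : RA ≠ [] ∨ LH ≠ [] := by tauto
    choose xf hx1 hx2 using fun B hB => gadgetX (hc B hB)
    choose wf hw1 hw2 using fun Ar hAr => gadgetW (hNR Ar hAr)
    set ws : List SGame := RA.attach.map (fun a => wf a.1 a.2) with hws
    set xs : List SGame := LH.attach.map (fun b => xf b.1 b.2) with hxs
    have hwsne : RA ≠ [] → ws ≠ [] := by
      intro h; rw [hws]; simpa [List.map_eq_nil_iff, List.attach_eq_nil_iff] using h
    have hxsne : LH ≠ [] → xs ≠ [] := by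
      intro h; rw [hxs]; simpa [List.map_eq_nil_iff, List.attach_eq_nil_iff] using h
    -- Left is happy in G + X
    have hGX : 0 < leftScore ((mk LG RG sG).sum (mk ws xs 0)) := by
      have hAX : 0 < rightScore ((mk LA RA sA).sum (mk ws xs 0)) := by
        apply lt_rS_sum (R1 := RA) (R2 := xs)
          (by rcases hne with h | h; exacts [Or.inl h, Or.inr (hxsne h)])
        · intro Ar hAr
          have hmem : wf Ar hAr ∈ ws := by
            rw [hws]; exact List.mem_map.mpr ⟨⟨Ar, hAr⟩, List.mem_attach _ _, rfl⟩
          obtain ⟨LAr, RAr, sAr⟩ := Ar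
          calc (0:ℝ) < rightScore ((mk LAr RAr sAr).sum (wf _ hAr)) := hw2 _ hAr
          _ ≤ _ := le_lS_sum₂ hmem
        · intro x hx
          rw [hxs] at hx
          obtain ⟨⟨B, hB⟩, -, rfl⟩ := List.mem_map.mp hx
          exact hx2 B hB
      calc (0:ℝ) < _ := hAX
      _ ≤ _ := le_lS_sum₁ hA
    -- Left is sad in H + X
    have hHX : leftScore ((mk LH RH sH).sum (mk ws xs 0)) < 0 := by
      apply lS_sum_lt (L1 := LH) (L2 := ws)
        (by rcases hne with h | h; exacts [Or.inr (hwsne h), Or.inl h])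
      · intro B hB
        have hmem : xf B hB ∈ xs := by
          rw [hxs]; exact List.mem_map.mpr ⟨⟨B, hB⟩, List.mem_attach _ _, rfl⟩
        obtain ⟨LB, RB, sB⟩ := B
        calc rightScore ((mk LB RB sB).sum (mk ws xs 0)) ≤
            leftScore ((mk LB RB sB).sum (xf _ hB)) := rS_sum_le₂ hmem
        _ < 0 := hx1 _ hB
      · intro w hw
        rw [hws] at hw
        obtain ⟨⟨Ar, hAr⟩, -, rfl⟩ := List.mem_map.mp hw
        exact hw1 Ar hAr
    have := (hv (mk ws xs 0)).1
    linarith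

/-- Key lemma, Right version. -/
lemma keyR {LG RG : List SGame} {sG : ℝ} {LH RH : List SGame} {sH : ℝ} {D : SGame}
    (hv : ValEq (mk LG RG sG) (mk LH RH sH)) (hD : D ∈ RG)
    (hNR : ∀ Dl ∈ D.leftOpts, ¬ Ge Dl (mk LH RH sH)) :
    ∃ E ∈ RH, Le E D := by
  by_contra hc
  push_neg at hc
  obtain ⟨LD, RD, sD⟩ := D
  rw [leftOpts_mk] at hNR
  by_cases hcor : LD = [] ∧ RH = []
  · obtain ⟨hLD, hRH⟩ := hcor
    set c := rightScore (mk LD RD sD) - sH + 1 with hc_def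
    have h1 : rightScore ((mk LH RH sH).sum (mk [zero] [] c)) = sH + c :=
      rS_sum_stuck hRH rfl
    have h2 : leftScore ((mk LD RD sD).sum (mk [zero] [] c)) < sH + c := by
      apply lS_sum_lt (Or.inr (by simp))
      · intro Dl hDl; rw [hLD] at hDl; simp at hDl
      · intro z hz
        rcases List.mem_singleton.mp hz with rfl
        have : rightScore ((mk LD RD sD).sum zero) = rightScore (mk LD RD sD) := by
          have := rS_shift' (mk LD RD sD) 0
          simpa [sc, zero] using this
        rw [this]; rw [hc_def]; ring_nf; linarith
    have h3 := rS_sum_le₁ (L1 := LG) (s1 := sG) (L2 := [zero]) (R2 := []) (s2 := c) hD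
    have h4 := (hv (mk [zero] [] c)).2
    linarith
  · have hne : LD ≠ [] ∨ RH ≠ [] := by tauto
    choose yf hy1 hy2 using fun E hE => gadgetW (hc E hE)
    choose vf hv1 hv2 using fun Dl hDl => gadgetX (hNR Dl hDl)
    set ys : List SGame := RH.attach.map (fun e => yf e.1 e.2) with hys
    set vs : List SGame := LD.attach.map (fun d => vf d.1 d.2) with hvs
    have hysne : RH ≠ [] → ys ≠ [] := by
      intro h; rw [hys]; simpa [List.map_eq_nil_iff, List.attach_eq_nil_iff] using h
    have hvsne : LD ≠ [] → vs ≠ [] := by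
      intro h; rw [hvs]; simpa [List.map_eq_nil_iff, List.attach_eq_nil_iff] using h
    -- Right is happy in G + X
    have hGX : rightScore ((mk LG RG sG).sum (mk ys vs 0)) < 0 := by
      have hDX : leftScore ((mk LD RD sD).sum (mk ys vs 0)) < 0 := by
        apply lS_sum_lt (L1 := LD) (L2 := ys)
          (by rcases hne with h | h; exacts [Or.inl h, Or.inr (hysne h)])
        · intro Dl hDl
          have hmem : vf Dl hDl ∈ vs := by
            rw [hvs]; exact List.mem_map.mpr ⟨⟨Dl, hDl⟩, List.mem_attach _ _, rfl⟩
          obtain ⟨LDl, RDl, sDl⟩ := Dl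
          calc rightScore ((mk LDl RDl sDl).sum (mk ys vs 0)) ≤
              leftScore ((mk LDl RDl sDl).sum (vf _ hDl)) := rS_sum_le₂ hmem
          _ < 0 := hv1 _ hDl
        · intro y hy
          rw [hys] at hy
          obtain ⟨⟨E, hE⟩, -, rfl⟩ := List.mem_map.mp hy
          exact hy1 E hE
      calc rightScore ((mk LG RG sG).sum (mk ys vs 0)) ≤ _ := rS_sum_le₁ hD
      _ < 0 := hDX
    -- Right is sad in H + X
    have hHX : 0 < rightScore ((mk LH RH sH).sum (mk ys vs 0)) := by
      apply lt_rS_sum (R1 := RH) (R2 := vs)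
        (by rcases hne with h | h; exacts [Or.inr (hvsne h), Or.inl h])
      · intro E hE
        have hmem : yf E hE ∈ ys := by
          rw [hys]; exact List.mem_map.mpr ⟨⟨E, hE⟩, List.mem_attach _ _, rfl⟩
        obtain ⟨LE, RE, sE⟩ := E
        calc (0:ℝ) < rightScore ((mk LE RE sE).sum (yf _ hE)) := hy2 _ hE
        _ ≤ _ := le_lS_sum₂ hmem
      · intro v hvm
        rw [hvs] at hvm
        obtain ⟨⟨Dl, hDl⟩, -, rfl⟩ := List.mem_map.mp hvm
        exact hv2 Dl hDl
    have := (hv (mk ys vs 0)).2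
    linarith

end SGame
namespace SGame

lemma canonical_mk {L R : List SGame} {s : ℝ} (h : Canonical (mk L R s)) :
    (∀ A ∈ L, ∀ B ∈ L, A ≠ B → ¬ Ge A B) ∧
    (∀ D ∈ R, ∀ E ∈ R, D ≠ E → ¬ Le D E) ∧
    (∀ A ∈ L, ∀ Ar ∈ A.rightOpts, ¬ Le Ar (mk L R s)) ∧
    (∀ D ∈ R, ∀ Dl ∈ D.leftOpts, ¬ Ge Dl (mk L R s)) ∧
    (∀ g ∈ L.attach, Canonical g.1) ∧ (∀ g ∈ R.attach, Canonical g.1) := by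
  rw [Canonical] at h; exact h

lemma main_aux : ∀ n : ℕ, ∀ G H : SGame, sizeOf G + sizeOf H ≤ n →
    ValEq G H → Canonical G → Canonical H → Equiv G H := by
  intro n
  induction n with
  | zero => intro G H h; cases G; simp only [mk.sizeOf_spec] at h; omega
  | succ n ih =>
    rintro ⟨LG, RG, sG⟩ ⟨LH, RH, sH⟩ hsz hv hG hH
    obtain ⟨hGdomL, hGdomR, hGrevL, hGrevR, hGcanL, hGcanR⟩ := canonical_mk hG
    obtain ⟨hHdomL, hHdomR, hHrevL, hHrevR, hHcanL, hHcanR⟩ := canonical_mk hH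
    have hszG : sizeOf (mk LG RG sG) + sizeOf (mk LH RH sH) ≤ n + 1 := hsz
    -- non-reversibility transferred across the value equivalence
    have hNRG : ∀ A ∈ LG, ∀ Ar ∈ A.rightOpts, ¬ Le Ar (mk LH RH sH) :=
      fun A hA Ar hAr hle => hGrevL A hA Ar hAr (le_congr_right (valEq_symm hv) hle)
    have hNRH : ∀ B ∈ LH, ∀ Br ∈ B.rightOpts, ¬ Le Br (mk LG RG sG) :=
      fun B hB Br hBr hle => hHrevL B hB Br hBr (le_congr_right hv hle)
    have hNLG : ∀ D ∈ RG, ∀ Dl ∈ D.leftOpts, ¬ Ge Dl (mk LH RH sH) :=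
      fun D hD Dl hDl hge => hGrevR D hD Dl hDl (ge_congr_right (valEq_symm hv) hge)
    have hNLH : ∀ E ∈ RH, ∀ El ∈ E.leftOpts, ¬ Ge El (mk LG RG sG) :=
      fun E hE El hEl hge => hHrevR E hE El hEl (ge_congr_right hv hge)
    -- the four matching claims
    have claimL1 : ∀ A ∈ LG, ∃ B ∈ LH, Equiv A B := by
      intro A hA
      obtain ⟨B, hB, hBA⟩ := keyL hv hA (hNRG A hA)
      obtain ⟨A', hA', hA'B⟩ := keyL (valEq_symm hv) hB (hNRH B hB)
      have hA'A : Ge A' A := ge_trans' hA'B hBA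
      have heq : A' = A := by
        by_contra hne
        exact hGdomL A' hA' A hA hne hA'A
      have hvAB : ValEq A B := ge_ge_valEq (heq ▸ hA'B) hBA
      refine ⟨B, hB, ih A B ?_ hvAB (hGcanL ⟨A, hA⟩ (List.mem_attach _ _))
        (hHcanL ⟨B, hB⟩ (List.mem_attach _ _))⟩
      have s1 := sizeOf_mem_left (R := RG) (s := sG) hA
      have s2 := sizeOf_mem_left (R := RH) (s := sH) hB
      omega
    have claimL2 : ∀ B ∈ LH, ∃ A ∈ LG, Equiv A B := by
      intro B hB
      obtain ⟨A, hA, hAB⟩ := keyL (valEq_symm hv) hB (hNRH B hB)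
      obtain ⟨B', hB', hB'A⟩ := keyL hv hA (hNRG A hA)
      have hB'B : Ge B' B := ge_trans' hB'A hAB
      have heq : B' = B := by
        by_contra hne
        exact hHdomL B' hB' B hB hne hB'B
      have hvAB : ValEq A B := ge_ge_valEq hAB (heq ▸ hB'A)
      refine ⟨A, hA, ih A B ?_ hvAB (hGcanL ⟨A, hA⟩ (List.mem_attach _ _))
        (hHcanL ⟨B, hB⟩ (List.mem_attach _ _))⟩
      have s1 := sizeOf_mem_left (R := RG) (s := sG) hA
      have s2 := sizeOf_mem_left (R := RH) (s := sH) hB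
      omega
    have claimR1 : ∀ D ∈ RG, ∃ E ∈ RH, Equiv D E := by
      intro D hD
      obtain ⟨E, hE, hED⟩ := keyR hv hD (hNLG D hD)
      obtain ⟨D', hD', hD'E⟩ := keyR (valEq_symm hv) hE (hNLH E hE)
      have hD'D : Le D' D := le_trans' hD'E hED
      have heq : D' = D := by
        by_contra hne
        exact hGdomR D' hD' D hD hne hD'D
      have hvDE : ValEq D E := le_le_valEq (heq ▸ hD'E) hED
      refine ⟨E, hE, ih D E ?_ hvDE (hGcanR ⟨D, hD⟩ (List.mem_attach _ _))
        (hHcanR ⟨E, hE⟩ (List.mem_attach _ _))⟩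
      have s1 := sizeOf_mem_right (L := LG) (s := sG) hD
      have s2 := sizeOf_mem_right (L := LH) (s := sH) hE
      omega
    have claimR2 : ∀ E ∈ RH, ∃ D ∈ RG, Equiv D E := by
      intro E hE
      obtain ⟨D, hD, hDE⟩ := keyR (valEq_symm hv) hE (hNLH E hE)
      obtain ⟨E', hE', hE'D⟩ := keyR hv hD (hNLG D hD)
      have hE'E : Le E' E := le_trans' hE'D hDE
      have heq : E' = E := by
        by_contra hne
        exact hHdomR E' hE' E hE hne hE'E
      have hvDE : ValEq D E := le_le_valEq hDE (heq ▸ hE'D)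
      refine ⟨D, hD, ih D E ?_ hvDE (hGcanR ⟨D, hD⟩ (List.mem_attach _ _))
        (hHcanR ⟨E, hE⟩ (List.mem_attach _ _))⟩
      have s1 := sizeOf_mem_right (L := LG) (s := sG) hD
      have s2 := sizeOf_mem_right (L := LH) (s := sH) hE
      omega
    rw [Equiv]
    refine ⟨?_, ?_, ?_, ?_, ?_⟩
    · rintro (hLG | hRG)
      · have hLH : LH = [] := by
          cases LH with
          | nil => rfl
          | cons B t =>
            obtain ⟨A, hA, -⟩ := claimL2 B (by simp)
            rw [hLG] at hA
            simp at hA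
        have h1 := (hv (mk [] [] 0)).1
        rw [lS_sum_stuck hLG rfl, lS_sum_stuck hLH rfl] at h1
        linarith
      · have hRH : RH = [] := by
          cases RH with
          | nil => rfl
          | cons E t =>
            obtain ⟨D, hD, -⟩ := claimR2 E (by simp)
            rw [hRG] at hD
            simp at hD
        have h1 := (hv (mk [] [] 0)).2
        rw [rS_sum_stuck hRG rfl, rS_sum_stuck hRH rfl] at h1
        linarith
    · rintro ⟨A, hA⟩ -
      obtain ⟨B, hB, hEq⟩ := claimL1 A hA
      exact ⟨⟨B, hB⟩, List.mem_attach _ _, hEq⟩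
    · rintro ⟨B, hB⟩ -
      obtain ⟨A, hA, hEq⟩ := claimL2 B hB
      exact ⟨⟨A, hA⟩, List.mem_attach _ _, hEq⟩
    · rintro ⟨D, hD⟩ -
      obtain ⟨E, hE, hEq⟩ := claimR1 D hD
      exact ⟨⟨E, hE⟩, List.mem_attach _ _, hEq⟩
    · rintro ⟨E, hE⟩ -
      obtain ⟨D, hD, hEq⟩ := claimR2 E hE
      exact ⟨⟨D, hD⟩, List.mem_attach _ _, hEq⟩

end SGame

/-- Equal games in canonical form (no dominated or reversible options) are
equivalent: identical underlying game trees with the same scores at all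
termination vertices. -/
theorem canonical_unique_up_to_equiv (G H : SGame) (h : SGame.gameEq G H)
    (hG : SGame.Canonical G) (hH : SGame.Canonical H) : SGame.Equiv G H :=
  SGame.main_aux _ G H le_rfl (SGame.valEq_of_gameEq h) hG hH
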